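/- arXiv:2501.02098 — 2 statements merged into one kernel-verified Lean document; each statement's English description precedes it below -/
import Mathlib

section
/- (Validity of Benders cuts / subgradient property of tight multipliers.) Let x̄, μ̄ ∈ ℝ^p. Assume the set { cᵀy − μ̄ᵀ(z − x̄) : y ∈ ℝ^n, z ∈ ℝ^p, B y ≤ b, C z + D y ≤ q } is nonempty and bounded below, and assume φ^{LR}(x̄, μ̄) = φ(x̄) (μ̄ is a tight/optimal multiplier for the fixing constraint z = x̄). Then for every x ∈ ℝ^p for which there exists y ∈ ℝ^n with B y ≤ b and C x + D y ≤ q, one has φ(x̄) + μ̄ᵀ(x − x̄) ≤ φ(x); i.e., μ̄ is a subgradient of the value function φ at x̄ and the affine cut generated at x̄ is valid. -/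
open Matrix

/-- **Validity of Benders cuts / subgradient property of tight multipliers.**
If `μbar` is a tight multiplier at `xbar`, i.e. `φ^{LR}(xbar, μbar) = φ(xbar)`,
then `φ(xbar) + μbarᵀ(x − xbar) ≤ φ(x)` at every feasible `x`. -/
theorem benders_cut_valid
    {n m k p : ℕ}
    (B : Matrix (Fin m) (Fin n) ℝ) (C : Matrix (Fin k) (Fin p) ℝ)
    (D : Matrix (Fin k) (Fin n) ℝ)
    (c : Fin n → ℝ) (b : Fin m → ℝ) (q : Fin k → ℝ)
    (xbar μbar : Fin p → ℝ)
    (hne : {r : ℝ | ∃ (y : Fin n → ℝ) (z : Fin p → ℝ),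
        B.mulVec y ≤ b ∧ C.mulVec z + D.mulVec y ≤ q ∧
          r = c ⬝ᵥ y - μbar ⬝ᵥ (z - xbar)}.Nonempty)
    (hbdd : BddBelow {r : ℝ | ∃ (y : Fin n → ℝ) (z : Fin p → ℝ),
        B.mulVec y ≤ b ∧ C.mulVec z + D.mulVec y ≤ q ∧
          r = c ⬝ᵥ y - μbar ⬝ᵥ (z - xbar)})
    (htight : sInf {r : ℝ | ∃ (y : Fin n → ℝ) (z : Fin p → ℝ),
        B.mulVec y ≤ b ∧ C.mulVec z + D.mulVec y ≤ q ∧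
          r = c ⬝ᵥ y - μbar ⬝ᵥ (z - xbar)}
      = sInf {r : ℝ | ∃ y : Fin n → ℝ,
        B.mulVec y ≤ b ∧ C.mulVec xbar + D.mulVec y ≤ q ∧ r = c ⬝ᵥ y}) :
    ∀ x : Fin p → ℝ,
      (∃ y : Fin n → ℝ, B.mulVec y ≤ b ∧ C.mulVec x + D.mulVec y ≤ q) →
      sInf {r : ℝ | ∃ y : Fin n → ℝ,
          B.mulVec y ≤ b ∧ C.mulVec xbar + D.mulVec y ≤ q ∧ r = c ⬝ᵥ y}
          + μbar ⬝ᵥ (x - xbar)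
        ≤ sInf {r : ℝ | ∃ y : Fin n → ℝ,
          B.mulVec y ≤ b ∧ C.mulVec x + D.mulVec y ≤ q ∧ r = c ⬝ᵥ y} := by
  intro x hx
  obtain ⟨y0, hy0b, hy0q⟩ := hx
  rw [← htight]
  have hne2 : {r : ℝ | ∃ y : Fin n → ℝ,
      B.mulVec y ≤ b ∧ C.mulVec x + D.mulVec y ≤ q ∧ r = c ⬝ᵥ y}.Nonempty :=
    ⟨c ⬝ᵥ y0, y0, hy0b, hy0q, rfl⟩
  apply le_csInf hne2
  rintro r ⟨y, hyb, hyq, rfl⟩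
  have hmem : c ⬝ᵥ y - μbar ⬝ᵥ (x - xbar) ∈ {r : ℝ | ∃ (y : Fin n → ℝ) (z : Fin p → ℝ),
      B.mulVec y ≤ b ∧ C.mulVec z + D.mulVec y ≤ q ∧
        r = c ⬝ᵥ y - μbar ⬝ᵥ (z - xbar)} := ⟨y, x, hyb, hyq, rfl⟩
  have := csInf_le hbdd hmem
  linarith
end

section
/- (Convexity of the linear-programming value function.) Let S = { v ∈ ℝ^p : ∃ y ∈ ℝ^n, B y ≤ b ∧ C v + D y ≤ q } be the set of points at which the second-stage problem is feasible. Then S is a convex set; moreover, if there exists L ∈ ℝ such that cᵀy ≥ L for every v ∈ S and every y ∈ ℝ^n with B y ≤ b and C v + D y ≤ q, then the value function φ is convex on S (ConvexOn ℝ S φ). -/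
open Matrix

/-- **Convexity of the linear-programming value function.**
The feasibility region `S` of the second-stage problem is convex, and if the
second-stage objective is uniformly bounded below over the feasible points,
then the value function `φ` is convex on `S`. -/
theorem value_function_convexOn
    {n m k p : ℕ}
    (B : Matrix (Fin m) (Fin n) ℝ) (C : Matrix (Fin k) (Fin p) ℝ)
    (D : Matrix (Fin k) (Fin n) ℝ)
    (c : Fin n → ℝ) (b : Fin m → ℝ) (q : Fin k → ℝ) :
    Convex ℝ {v : Fin p → ℝ | ∃ y : Fin n → ℝ,
        B.mulVec y ≤ b ∧ C.mulVec v + D.mulVec y ≤ q} ∧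
    ((∃ L : ℝ, ∀ v ∈ {v : Fin p → ℝ | ∃ y : Fin n → ℝ,
          B.mulVec y ≤ b ∧ C.mulVec v + D.mulVec y ≤ q},
        ∀ y : Fin n → ℝ, B.mulVec y ≤ b → C.mulVec v + D.mulVec y ≤ q →
          L ≤ c ⬝ᵥ y) →
      ConvexOn ℝ
        {v : Fin p → ℝ | ∃ y : Fin n → ℝ,
          B.mulVec y ≤ b ∧ C.mulVec v + D.mulVec y ≤ q}
        (fun v => sInf {r : ℝ | ∃ y : Fin n → ℝ,
          B.mulVec y ≤ b ∧ C.mulVec v + D.mulVec y ≤ q ∧ r = c ⬝ᵥ y})) := by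
  set S := {v : Fin p → ℝ | ∃ y : Fin n → ℝ,
      B.mulVec y ≤ b ∧ C.mulVec v + D.mulVec y ≤ q} with hS
  -- feasibility combines
  have hcomb : ∀ v₁ v₂ : Fin p → ℝ, ∀ y₁ y₂ : Fin n → ℝ,
      B.mulVec y₁ ≤ b → C.mulVec v₁ + D.mulVec y₁ ≤ q →
      B.mulVec y₂ ≤ b → C.mulVec v₂ + D.mulVec y₂ ≤ q →
      ∀ a t : ℝ, 0 ≤ a → 0 ≤ t → a + t = 1 →
        B.mulVec (a • y₁ + t • y₂) ≤ b ∧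
        C.mulVec (a • v₁ + t • v₂) + D.mulVec (a • y₁ + t • y₂) ≤ q := by
    intro v₁ v₂ y₁ y₂ hB1 hC1 hB2 hC2 a t ha ht hat
    constructor
    · intro i
      have h1 := hB1 i
      have h2 := hB2 i
      simp only [mulVec_add, mulVec_smul, Pi.add_apply, Pi.smul_apply,
        smul_eq_mul] at *
      have hb : a * b i + t * b i = b i := by rw [← add_mul, hat, one_mul]
      linarith [mul_le_mul_of_nonneg_left h1 ha, mul_le_mul_of_nonneg_left h2 ht]
    · intro i
      have h1 := hC1 i
      have h2 := hC2 i
      simp only [mulVec_add, mulVec_smul, Pi.add_apply, Pi.smul_apply,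
        smul_eq_mul] at *
      have hq : a * q i + t * q i = q i := by rw [← add_mul, hat, one_mul]
      linarith [mul_le_mul_of_nonneg_left h1 ha, mul_le_mul_of_nonneg_left h2 ht]
  have hconv : Convex ℝ S := by
    intro v₁ hv₁ v₂ hv₂ a t ha ht hat
    obtain ⟨y₁, hB1, hC1⟩ := hv₁
    obtain ⟨y₂, hB2, hC2⟩ := hv₂
    exact ⟨a • y₁ + t • y₂, hcomb v₁ v₂ y₁ y₂ hB1 hC1 hB2 hC2 a t ha ht hat⟩
  refine ⟨hconv, ?_⟩
  rintro ⟨L, hL⟩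
  refine ⟨hconv, ?_⟩
  intro v₁ hv₁ v₂ hv₂ a t ha ht hat
  set T : (Fin p → ℝ) → Set ℝ := fun v => {r : ℝ | ∃ y : Fin n → ℝ,
      B.mulVec y ≤ b ∧ C.mulVec v + D.mulVec y ≤ q ∧ r = c ⬝ᵥ y} with hT
  have hne : ∀ v ∈ S, (T v).Nonempty := by
    rintro v ⟨y, h1, h2⟩
    exact ⟨c ⬝ᵥ y, y, h1, h2, rfl⟩
  have hbdd : ∀ v ∈ S, BddBelow (T v) := by
    intro v hv
    refine ⟨L, ?_⟩
    rintro r ⟨y, h1, h2, rfl⟩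
    exact hL v hv y h1 h2
  have hw : a • v₁ + t • v₂ ∈ S := hconv hv₁ hv₂ ha ht hat
  -- key bound
  have hkey : ∀ r₁ ∈ T v₁, ∀ r₂ ∈ T v₂,
      sInf (T (a • v₁ + t • v₂)) ≤ a * r₁ + t * r₂ := by
    rintro r₁ ⟨y₁, hB1, hC1, rfl⟩ r₂ ⟨y₂, hB2, hC2, rfl⟩
    have hfeas := hcomb v₁ v₂ y₁ y₂ hB1 hC1 hB2 hC2 a t ha ht hat
    have hmem : a * (c ⬝ᵥ y₁) + t * (c ⬝ᵥ y₂) ∈ T (a • v₁ + t • v₂) := by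
      refine ⟨a • y₁ + t • y₂, hfeas.1, hfeas.2, ?_⟩
      simp [dotProduct_add, dotProduct_smul, smul_eq_mul]
    exact csInf_le (hbdd _ hw) hmem
  show sInf (T (a • v₁ + t • v₂)) ≤ a • sInf (T v₁) + t • sInf (T v₂)
  simp only [smul_eq_mul]
  refine le_of_forall_pos_le_add ?_
  intro ε hε
  obtain ⟨r₁, hr₁, hlt₁⟩ := Real.lt_sInf_add_pos (hne v₁ hv₁) hε
  obtain ⟨r₂, hr₂, hlt₂⟩ := Real.lt_sInf_add_pos (hne v₂ hv₂) hε
  have := hkey r₁ hr₁ r₂ hr₂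
  nlinarith
end
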